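/- Let A ⊆ Φ⁺ be a finite set that is biclosed (both A and Φ⁺ \ A are closed). Then there exists w ∈ W with A = N(w). -/

import Mathlib

open Pointwise

noncomputable section

/-- The set of nonnegative linear combinations of elements of `X`. -/
def coneOf {V : Type*} [AddCommGroup V] [Module ℝ V] (X : Set V) : Set V :=
  {v | ∃ (n : ℕ) (c : Fin n → ℝ) (f : Fin n → V),
    (∀ i, 0 ≤ c i) ∧ (∀ i, f i ∈ X) ∧ ∑ i, c i • f i = v}

/-- A geometric representation of the Coxeter system `cs` on the real quadratic
space `(V, bil)`: each simple generator acts as the `bil`-reflection in its simple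
root, and the simple roots form a simple system. -/
structure GeomRep {B : Type*} [Fintype B] {W : Type*} [Group W]
    (M : CoxeterMatrix B) (cs : CoxeterSystem M W)
    (V : Type*) [AddCommGroup V] [Module ℝ V] where
  /-- the symmetric bilinear form -/
  bil : LinearMap.BilinForm ℝ V
  bil_symm : ∀ u v : V, bil u v = bil v u
  /-- the representation of `W` by linear automorphisms of `V` -/
  π : W →* (V ≃ₗ[ℝ] V)
  /-- the simple roots -/
  α : B → V
  norm_one : ∀ i, bil (α i) (α i) = 1
  simple_refl : ∀ i v, π (cs.simple i) v = v - (2 * bil (α i) v) • α i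
  pos_indep : ∀ c : B → ℝ, (∀ i, 0 ≤ c i) → ∑ i, c i • α i = 0 → ∀ i, c i = 0
  angle_finite : ∀ i j, i ≠ j → M.M i j ≠ 0 →
    bil (α i) (α j) = - Real.cos (Real.pi / (M.M i j : ℝ))
  angle_infinite : ∀ i j, i ≠ j → M.M i j = 0 → bil (α i) (α j) ≤ -1

namespace GeomRep

variable {B : Type*} [Fintype B] {W : Type*} [Group W]
  {M : CoxeterMatrix B} {cs : CoxeterSystem M W}
  {V : Type*} [AddCommGroup V] [Module ℝ V]

/-- The root system `Φ = W(Δ)`. -/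
def Phi (G : GeomRep M cs V) : Set V := {v | ∃ (w : W) (i : B), G.π w (G.α i) = v}

/-- The positive roots `Φ⁺ = cone(Δ) ∩ Φ`. -/
def PhiPos (G : GeomRep M cs V) : Set V := G.Phi ∩ coneOf (Set.range G.α)

/-- The (left) inversion set `N(w) = Φ⁺ ∩ w(Φ⁻)`. -/
def N (G : GeomRep M cs V) (w : W) : Set V := G.PhiPos ∩ (G.π w '' (-G.PhiPos))

/-- `A ⊆ Φ⁺` is closed if for all `α, β ∈ A`, every root in `cone(α,β)` lies in `A`. -/
def IsClosedSet (G : GeomRep M cs V) (A : Set V) : Prop :=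
  ∀ a ∈ A, ∀ b ∈ A, coneOf {a, b} ∩ G.Phi ⊆ A

/-- `A` is biclosed if `A` and `Φ⁺ \ A` are both closed. -/
def IsBiclosed (G : GeomRep M cs V) (A : Set V) : Prop :=
  G.IsClosedSet A ∧ G.IsClosedSet (G.PhiPos \ A)

/-- `A` is convex if `A = cone(A) ∩ Φ`. -/
def IsConvexSet (G : GeomRep M cs V) (A : Set V) : Prop :=
  A = coneOf A ∩ G.Phi

/-- `A` is biconvex if `A` and `Φ⁺ \ A` are both convex. -/
def IsBiconvex (G : GeomRep M cs V) (A : Set V) : Prop :=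
  G.IsConvexSet A ∧ G.IsConvexSet (G.PhiPos \ A)

/-- `A ⊆ Φ⁺` is separable if `cone(A) ∩ cone(Φ⁺ \ A) = {0}`. -/
def IsSeparable (G : GeomRep M cs V) (A : Set V) : Prop :=
  coneOf A ∩ coneOf (G.PhiPos \ A) = {0}

end GeomRep

/-- The right weak order on a Coxeter group. -/
def WeakLE {B : Type*} {W : Type*} [Group W] {M : CoxeterMatrix B}
    (cs : CoxeterSystem M W) (u w : W) : Prop :=
  cs.length u + cs.length (u⁻¹ * w) = cs.length w


/-! ## Auxiliary development -/

section ConeLemmas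
variable {V : Type*} [AddCommGroup V] [Module ℝ V]

lemma coneOf_subset_of_closed {C X : Set V} (h0 : (0:V) ∈ C)
    (hadd : ∀ x ∈ C, ∀ y ∈ C, x + y ∈ C)
    (hsmul : ∀ x ∈ X, ∀ t : ℝ, 0 ≤ t → t • x ∈ C) : coneOf X ⊆ C := by
  rintro v ⟨n, c, f, hc, hf, rfl⟩
  induction n with
  | zero => simpa using h0
  | succ n ih =>
    rw [Fin.sum_univ_castSucc]
    exact hadd _ (ih (fun i => c i.castSucc) (fun i => f i.castSucc)
        (fun i => hc _) (fun i => hf _)) _ (hsmul _ (hf _) _ (hc _))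

lemma smul_add_smul_mem_coneOf {a b : V} {c d : ℝ} (hc : 0 ≤ c) (hd : 0 ≤ d) :
    c • a + d • b ∈ coneOf ({a, b} : Set V) := by
  refine ⟨2, ![c, d], ![a, b], ?_, ?_, ?_⟩
  · intro i; fin_cases i <;> simpa
  · intro i; fin_cases i <;> simp
  · simp [Fin.sum_univ_two]

lemma mem_coneOf_pair {a b v : V} :
    v ∈ coneOf ({a, b} : Set V) ↔ ∃ c d : ℝ, 0 ≤ c ∧ 0 ≤ d ∧ v = c • a + d • b := by
  constructor
  · intro hv
    have : v ∈ {v : V | ∃ c d : ℝ, 0 ≤ c ∧ 0 ≤ d ∧ v = c • a + d • b} := by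
      refine coneOf_subset_of_closed ?_ ?_ ?_ hv
      · exact ⟨0, 0, le_refl _, le_refl _, by simp⟩
      · rintro x ⟨c₁, d₁, hc₁, hd₁, rfl⟩ y ⟨c₂, d₂, hc₂, hd₂, rfl⟩
        exact ⟨c₁ + c₂, d₁ + d₂, by positivity, by positivity, by
          simp [add_smul]; abel⟩
      · rintro x hx t ht
        rcases hx with rfl | rfl
        · exact ⟨t, 0, ht, le_refl _, by simp⟩
        · exact ⟨0, t, le_refl _, ht, by simp⟩
    exact this
  · rintro ⟨c, d, hc, hd, rfl⟩
    exact smul_add_smul_mem_coneOf hc hd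
end ConeLemmas

namespace GeomRep

variable {B : Type*} [Fintype B] {W : Type*} [Group W]
  {M : CoxeterMatrix B} {cs : CoxeterSystem M W}
  {V : Type*} [AddCommGroup V] [Module ℝ V] (G : GeomRep M cs V)

/-- The cone of nonnegative combinations of simple roots, sum form. -/
def PosCone : Set V := {v | ∃ c : B → ℝ, (∀ b, 0 ≤ c b) ∧ ∑ b, c b • G.α b = v}

lemma zero_mem_posCone : (0:V) ∈ G.PosCone := ⟨0, by simp, by simp⟩

lemma add_mem_posCone : ∀ x ∈ G.PosCone, ∀ y ∈ G.PosCone, x + y ∈ G.PosCone := by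
  rintro x ⟨c, hc, rfl⟩ y ⟨d, hd, rfl⟩
  exact ⟨c + d, fun b => add_nonneg (hc b) (hd b),
   by rw [← Finset.sum_add_distrib]; congr 1; ext b; rw [Pi.add_apply, add_smul]⟩

lemma smul_mem_posCone {t : ℝ} (ht : 0 ≤ t) : ∀ x ∈ G.PosCone, t • x ∈ G.PosCone := by
  rintro x ⟨c, hc, rfl⟩
  refine ⟨t • c, fun b => mul_nonneg ht (hc b), ?_⟩
  rw [Finset.smul_sum]; congr 1; ext b; rw [Pi.smul_apply, smul_smul, smul_eq_mul]

lemma alpha_mem_posCone (b : B) : G.α b ∈ G.PosCone := by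
  classical
  refine ⟨fun b' => if b' = b then 1 else 0, fun b' => by dsimp only; split <;> norm_num, ?_⟩
  have : ∀ b' : B, (if b' = b then (1:ℝ) else 0) • G.α b'
      = if b' = b then G.α b' else 0 := by intro b'; split <;> simp
  rw [Finset.sum_congr rfl (fun b' _ => this b'), Finset.sum_ite_eq' Finset.univ b G.α]
  simp

lemma coneOf_range_alpha : coneOf (Set.range G.α) = G.PosCone := by
  apply Set.Subset.antisymm
  · refine coneOf_subset_of_closed G.zero_mem_posCone G.add_mem_posCone ?_
    rintro x ⟨b, rfl⟩ t ht
    exact G.smul_mem_posCone ht _ (G.alpha_mem_posCone b)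
  · rintro v ⟨c, hc, rfl⟩
    classical
    refine ⟨Fintype.card B, fun k => c ((Fintype.equivFin B).symm k),
      fun k => G.α ((Fintype.equivFin B).symm k), fun k => hc _, fun k => ⟨_, rfl⟩, ?_⟩
    exact Fintype.sum_equiv (Fintype.equivFin B).symm _ _ (fun k => rfl)

/-- Existence of a linear functional positive on all simple roots. -/
lemma exists_posFun : ∃ F : V →ₗ[ℝ] ℝ, ∀ b, 0 < F (G.α b) := by
  classical
  set U : Submodule ℝ V := Submodule.span ℝ (Set.range G.α) with hU
  have hfd : FiniteDimensional ℝ U := FiniteDimensional.span_of_finite ℝ (Set.finite_range G.α)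
  set d : ℕ := Module.finrank ℝ U with hd
  let bas : Module.Basis (Fin d) ℝ U := Module.finBasis ℝ U
  let e : U ≃ₗ[ℝ] EuclideanSpace ℝ (Fin d) :=
    bas.equivFun.trans (EuclideanSpace.equiv (Fin d) ℝ).symm.toLinearEquiv
  have hmem : ∀ b, G.α b ∈ U := fun b => Submodule.subset_span ⟨b, rfl⟩
  let p : B → EuclideanSpace ℝ (Fin d) := fun b => e ⟨G.α b, hmem b⟩
  set K : Set (EuclideanSpace ℝ (Fin d)) := convexHull ℝ (Set.range p) with hK
  have hKcompact : IsCompact K := (Set.finite_range p).isCompact_convexHull ℝ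
  have h0K : (0 : EuclideanSpace ℝ (Fin d)) ∉ K := by
    intro h0
    rw [hK, convexHull_eq] at h0
    obtain ⟨ι, t, w, z, hw0, hw1, hz, hcm⟩ := h0
    rw [Finset.centerMass_eq_of_sum_1 _ _ hw1] at hcm
    choose bb hbb using hz
    -- transfer to weights on B
    set C : B → ℝ := fun b0 => ∑ k ∈ t.attach.filter (fun k => bb k.1 k.2 = b0), w k.1 with hC
    have hC0 : ∀ b0, 0 ≤ C b0 := by
      intro b0; apply Finset.sum_nonneg; rintro ⟨k, hk⟩ -; exact hw0 k hk
    have hsum₁ : ∑ b0, C b0 = 1 := by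
      rw [hC]
      rw [Finset.sum_fiberwise_eq_sum_filter t.attach Finset.univ
        (fun k => bb k.1 k.2) (fun k => w k.1)]
      simp only [Finset.mem_univ, Finset.filter_true]
      rw [← hw1]
      exact Finset.sum_attach t w
    have hsumz : ∑ b0, C b0 • (⟨G.α b0, hmem b0⟩ : U) = 0 := by
      have step1 : ∑ b0, C b0 • (⟨G.α b0, hmem b0⟩ : U)
          = ∑ k ∈ t.attach, w k.1 • (⟨G.α (bb k.1 k.2), hmem _⟩ : U) := by
        have e1 : ∀ b0 : B, C b0 • (⟨G.α b0, hmem b0⟩ : U)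
            = ∑ k ∈ t.attach.filter (fun k => bb k.1 k.2 = b0),
                w k.1 • (⟨G.α (bb k.1 k.2), hmem _⟩ : U) := by
          intro b0
          rw [hC]
          simp only
          rw [Finset.sum_smul]
          refine Finset.sum_congr rfl (fun k hk => ?_)
          rw [Finset.mem_filter] at hk
          congr 2 <;> rw [hk.2]
        rw [Finset.sum_congr rfl (fun b0 _ => e1 b0)]
        rw [Finset.sum_fiberwise_eq_sum_filter t.attach Finset.univ
          (fun k => bb k.1 k.2) (fun k => w k.1 • (⟨G.α (bb k.1 k.2), hmem _⟩ : U))]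
        simp only [Finset.mem_univ, Finset.filter_true]
      rw [step1]
      apply e.injective
      rw [map_sum, map_zero]
      have e2 : ∀ k ∈ t.attach, e (w k.1 • (⟨G.α (bb k.1 k.2), hmem _⟩ : U)) = w k.1 • z k.1 := by
        rintro ⟨k, hk⟩ -
        rw [map_smul]
        congr 1
        exact hbb k hk
      rw [Finset.sum_congr rfl e2, Finset.sum_attach t (fun k => w k • z k)]
      exact hcm
    have hzero : ∀ b0, C b0 = 0 := by
      apply G.pos_indep C hC0
      have := congrArg (Submodule.subtype U) hsumz
      rw [map_sum, map_zero] at this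
      simpa using this
    rw [Finset.sum_congr rfl (fun b0 _ => hzero b0)] at hsum₁
    simp at hsum₁
  obtain ⟨f, u, hfu, hK⟩ := geometric_hahn_banach_point_closed (convex_convexHull ℝ _)
    hKcompact.isClosed h0K
  rw [map_zero] at hfu
  obtain ⟨q, hq⟩ := Submodule.exists_isCompl U
  let proj : V →ₗ[ℝ] U := Submodule.linearProjOfIsCompl U q hq
  refine ⟨(f : EuclideanSpace ℝ (Fin d) →ₗ[ℝ] ℝ) ∘ₗ (e : U →ₗ[ℝ] EuclideanSpace ℝ (Fin d)) ∘ₗ proj, fun b => ?_⟩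
  have h1 : proj (G.α b) = ⟨G.α b, hmem b⟩ := Submodule.linearProjOfIsCompl_apply_left hq ⟨G.α b, hmem b⟩
  have h2 : p b ∈ K := subset_convexHull ℝ _ ⟨b, rfl⟩
  have := hK _ h2
  simp only [LinearMap.coe_comp, Function.comp_apply, h1]
  calc (0:ℝ) < u := lt_of_le_of_lt (le_of_eq rfl) (by linarith)
    _ < f (p b) := this


/-! ### Representation basics -/

lemma pi_mul_apply (u w : W) (v : V) : G.π (u * w) v = G.π u (G.π w v) := by
  rw [map_mul]; rfl

lemma pi_one_apply (v : V) : G.π 1 v = v := by rw [map_one]; rfl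

lemma pi_simple_apply (i : B) (v : V) :
    G.π (cs.simple i) v = v - (2 * G.bil (G.α i) v) • G.α i := G.simple_refl i v

lemma pi_simple_alpha (i : B) : G.π (cs.simple i) (G.α i) = - G.α i := by
  rw [G.simple_refl, G.norm_one]
  module

lemma pi_simple_sq (i : B) (v : V) :
    G.π (cs.simple i) (G.π (cs.simple i) v) = v := by
  rw [← G.pi_mul_apply, cs.simple_mul_simple_self, G.pi_one_apply]

lemma bil_simple_invar (i : B) (u v : V) :
    G.bil (G.π (cs.simple i) u) (G.π (cs.simple i) v) = G.bil u v := by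
  rw [G.simple_refl, G.simple_refl]
  have h1 := G.norm_one i
  have h2 := G.bil_symm u (G.α i)
  simp only [map_sub, map_smul, LinearMap.sub_apply, LinearMap.smul_apply, smul_eq_mul]
  rw [h1, h2]
  ring

lemma bil_pi_invar (w : W) (u v : V) :
    G.bil (G.π w u) (G.π w v) = G.bil u v := by
  obtain ⟨ω, rfl⟩ := cs.wordProd_surjective w
  induction ω generalizing u v with
  | nil => rw [cs.wordProd_nil, G.pi_one_apply, G.pi_one_apply]
  | cons l ω ih =>
    rw [cs.wordProd_cons, G.pi_mul_apply, G.pi_mul_apply, G.bil_simple_invar]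
    exact ih _ _

/-! ### Roots -/

lemma alpha_mem_phi (i : B) : G.α i ∈ G.Phi := ⟨1, i, G.pi_one_apply _⟩

lemma phi_pi_mem {v : V} (hv : v ∈ G.Phi) (w : W) : G.π w v ∈ G.Phi := by
  obtain ⟨u, i, rfl⟩ := hv
  exact ⟨w * u, i, G.pi_mul_apply w u _⟩

lemma phi_neg_mem {v : V} (hv : v ∈ G.Phi) : -v ∈ G.Phi := by
  obtain ⟨u, i, rfl⟩ := hv
  refine ⟨u * cs.simple i, i, ?_⟩
  rw [G.pi_mul_apply, G.pi_simple_alpha, map_neg]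

lemma bil_root_self {v : V} (hv : v ∈ G.Phi) : G.bil v v = 1 := by
  obtain ⟨u, i, rfl⟩ := hv
  rw [G.bil_pi_invar, G.norm_one]

lemma root_ne_zero {v : V} (hv : v ∈ G.Phi) : v ≠ 0 := by
  intro h
  have := G.bil_root_self hv
  rw [h] at this
  simp at this

lemma gram_nonpos {i j : B} (hij : i ≠ j) : G.bil (G.α i) (G.α j) ≤ 0 := by
  by_cases hM : M.M i j = 0
  · linarith [G.angle_infinite i j hij hM]
  · rw [G.angle_finite i j hij hM]
    have h2 : 2 ≤ M.M i j := by
      have := M.off_diagonal i j hij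
      omega
    have hpos : (0:ℝ) < (M.M i j : ℝ) := by positivity
    have : Real.pi / (M.M i j : ℝ) ≤ Real.pi / 2 := by
      apply div_le_div_of_nonneg_left Real.pi_pos.le (by norm_num)
      exact_mod_cast h2
    have h0 : 0 ≤ Real.pi / (M.M i j : ℝ) := by positivity
    have := Real.cos_nonneg_of_mem_Icc ⟨by linarith, this⟩
    linarith

end GeomRep

/-! ### Chebyshev-like sequences -/

def chebS (c : ℝ) : ℕ → ℝ
  | 0 => 0
  | 1 => 1
  | (n+2) => 2*c*chebS c (n+1) - chebS c n

@[simp] lemma chebS_zero (c : ℝ) : chebS c 0 = 0 := rfl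
@[simp] lemma chebS_one (c : ℝ) : chebS c 1 = 1 := rfl
lemma chebS_succ_succ (c : ℝ) (n : ℕ) :
    chebS c (n+2) = 2*c*chebS c (n+1) - chebS c n := rfl

lemma chebS_nonneg_of_one_le {c : ℝ} (hc : 1 ≤ c) :
    ∀ n, 0 ≤ chebS c n ∧ chebS c n ≤ chebS c (n+1) := by
  intro n
  induction n with
  | zero => norm_num
  | succ n ih =>
    obtain ⟨h0, hmono⟩ := ih
    have h1 : 0 ≤ chebS c (n+1) := le_trans h0 hmono
    refine ⟨h1, ?_⟩
    rw [chebS_succ_succ]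
    nlinarith

lemma chebS_eq_sin {θ : ℝ} (hθ : Real.sin θ ≠ 0) :
    ∀ n, chebS (Real.cos θ) n = Real.sin (n * θ) / Real.sin θ := by
  intro n
  induction n using Nat.strong_induction_on with
  | _ n ih =>
    match n with
    | 0 => simp
    | 1 => simp [div_self hθ]
    | (n+2) =>
      rw [chebS_succ_succ, ih (n+1) (by omega), ih n (by omega)]
      have key : Real.sin ((n+2 : ℕ) * θ) =
          2 * Real.cos θ * Real.sin ((n+1 : ℕ) * θ) - Real.sin (n * θ) := by
        have e1 : ((n+2 : ℕ) : ℝ) * θ = ((n+1 : ℕ) : ℝ) * θ + θ := by push_cast; ring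
        have e2 : (n : ℝ) * θ = ((n+1 : ℕ) : ℝ) * θ - θ := by push_cast; ring
        rw [e1, e2, Real.sin_add, Real.sin_sub]
        ring
      rw [key]
      field_simp
      try ring

namespace GeomRep

variable {B : Type*} [Fintype B] {W : Type*} [Group W]
  {M : CoxeterMatrix B} {cs : CoxeterSystem M W}
  {V : Type*} [AddCommGroup V] [Module ℝ V] (G : GeomRep M cs V)

lemma simple_act_pair_i (i j : B) (a b : ℝ) :
    G.π (cs.simple i) (a • G.α i + b • G.α j)
      = (2*(-G.bil (G.α i) (G.α j))*b - a) • G.α i + b • G.α j := by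
  rw [G.simple_refl]
  have h1 := G.norm_one i
  simp only [map_add, map_smul, smul_eq_mul, h1]
  module

lemma simple_act_pair_j (i j : B) (a b : ℝ) :
    G.π (cs.simple j) (a • G.α i + b • G.α j)
      = a • G.α i + (2*(-G.bil (G.α i) (G.α j))*a - b) • G.α j := by
  rw [G.simple_refl]
  have h1 := G.norm_one j
  have h2 := G.bil_symm (G.α j) (G.α i)
  simp only [map_add, map_smul, smul_eq_mul, h1, h2]
  module

/-- Action of alternating words on a simple root, in terms of Chebyshev coefficients. -/
lemma alt_act (i j : B) (hij : i ≠ j) (m : ℕ) :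
    G.π (cs.wordProd (CoxeterSystem.alternatingWord i j m)) (G.α i)
      = (if Even m then chebS (-G.bil (G.α i) (G.α j)) (m+1)
          else chebS (-G.bil (G.α i) (G.α j)) m) • G.α i
        + (if Even m then chebS (-G.bil (G.α i) (G.α j)) m
          else chebS (-G.bil (G.α i) (G.α j)) (m+1)) • G.α j := by
  set c := -G.bil (G.α i) (G.α j) with hc
  induction m with
  | zero =>
    simp [CoxeterSystem.alternatingWord]
  | succ m ih =>
    rw [CoxeterSystem.alternatingWord_succ', cs.wordProd_cons, G.pi_mul_apply, ih]
    rcases Nat.even_or_odd m with hm | hm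
    · have hm1 : ¬ Even (m+1) := by rw [Nat.even_add_one]; exact fun h => h hm
      simp only [if_pos hm, if_neg hm1]
      rw [G.simple_act_pair_j i j, ← hc, chebS_succ_succ]
      try ring_nf
    · have hm' : ¬ Even m := Nat.not_even_iff_odd.mpr hm
      have hm1 : Even (m+1) := by rw [Nat.even_add_one]; exact hm'
      simp only [if_neg hm', if_pos hm1]
      rw [G.simple_act_pair_i i j, ← hc, chebS_succ_succ]
      try ring_nf

end GeomRep

/-! ### Reduction of words in two letters to alternating words -/

section AltWords

variable {B : Type*} [Fintype B] {W : Type*} [Group W]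
  {M : CoxeterMatrix B} (cs : CoxeterSystem M W)

open CoxeterSystem

lemma alt_expand (i j : B) (m : ℕ) :
    cs.wordProd (alternatingWord i j (m+1))
      = cs.simple (if Even m then j else i) * cs.wordProd (alternatingWord i j m) := by
  rw [alternatingWord_succ', cs.wordProd_cons]

lemma simple_mul_alt (i j l : B) (hl : l = i ∨ l = j) (m : ℕ) :
    ∃ m' ≤ m + 1,
      cs.simple l * cs.wordProd (alternatingWord i j m)
        = cs.wordProd (alternatingWord i j m')
      ∨ cs.simple l * cs.wordProd (alternatingWord i j m)
        = cs.wordProd (alternatingWord j i m') := by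
  by_cases hl' : l = (if Even m then j else i)
  · refine ⟨m + 1, le_refl _, Or.inl ?_⟩
    rw [alt_expand cs i j m, ← hl']
  · match m with
    | 0 =>
      -- l ≠ j, so l = i
      simp only [if_pos (Even.zero (α := ℕ))] at hl'
      have hli : l = i := hl.resolve_right hl'
      refine ⟨1, by omega, Or.inr ?_⟩
      subst hli
      simp [alternatingWord]
    | (m''+1) =>
      -- l is the first letter of alternatingWord i j (m''+1)
      have hfl : l = (if Even m'' then j else i) := by
        rcases Nat.even_or_odd m'' with he | ho
        · have : ¬ Even (m''+1) := by rw [Nat.even_add_one]; exact fun h => h he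
          rw [if_neg this] at hl'
          rw [if_pos he]
          exact hl.resolve_left hl'
        · have he' : ¬ Even m'' := Nat.not_even_iff_odd.mpr ho
          have : Even (m''+1) := by rw [Nat.even_add_one]; exact he'
          rw [if_pos this] at hl'
          rw [if_neg he']
          exact hl.resolve_right hl'
      refine ⟨m'', by omega, Or.inl ?_⟩
      rw [alt_expand cs i j m'', ← hfl, ← mul_assoc, cs.simple_mul_simple_self, one_mul]

lemma exists_alt (i j : B) (ω : List B) (hω : ∀ l ∈ ω, l = i ∨ l = j) :
    ∃ m ≤ ω.length,
      cs.wordProd ω = cs.wordProd (alternatingWord i j m)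
      ∨ cs.wordProd ω = cs.wordProd (alternatingWord j i m) := by
  induction ω with
  | nil => exact ⟨0, le_refl _, Or.inl rfl⟩
  | cons l ω ih =>
    obtain ⟨m, hm, hc | hc⟩ := ih (fun l' hl' => hω l' (List.mem_cons_of_mem l hl'))
    · obtain ⟨m', hm', hc'⟩ := simple_mul_alt cs i j l (hω l List.mem_cons_self) m
      refine ⟨m', by simpa using le_trans hm' (by omega), ?_⟩
      rw [cs.wordProd_cons, hc]
      exact hc'
    · obtain ⟨m', hm', hc'⟩ := simple_mul_alt cs j i l (Or.symm (hω l List.mem_cons_self)) m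
      refine ⟨m', by simpa using le_trans hm' (by omega), ?_⟩
      rw [cs.wordProd_cons, hc]
      exact hc'.symm

end AltWords

namespace GeomRep

variable {B : Type*} [Fintype B] {W : Type*} [Group W]
  {M : CoxeterMatrix B} {cs : CoxeterSystem M W}
  {V : Type*} [AddCommGroup V] [Module ℝ V] (G : GeomRep M cs V)

open CoxeterSystem

lemma dihedral_pos (i j : B) (hij : i ≠ j) (ω : List B)
    (hω : ∀ l ∈ ω, l = i ∨ l = j)
    (hred : cs.length (cs.wordProd ω) = ω.length)
    (hus : cs.length (cs.wordProd ω * cs.simple i) = ω.length + 1) :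
    ∃ a b : ℝ, 0 ≤ a ∧ 0 ≤ b ∧
      G.π (cs.wordProd ω) (G.α i) = a • G.α i + b • G.α j := by
  obtain ⟨m, hm, hcase | hcase⟩ := exists_alt cs i j ω hω
  swap
  · -- word ends in i : impossible (or trivial if m = 0)
    match m, hm with
    | 0, hm =>
      refine ⟨1, 0, by norm_num, le_refl _, ?_⟩
      have h1 : cs.wordProd ω = 1 := by rw [hcase]; simp [alternatingWord]
      rw [h1, G.pi_one_apply]
      module
    | (m''+1), hm =>
      exfalso
      have hconcat : alternatingWord j i (m''+1) = (alternatingWord i j m'').concat i :=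
        alternatingWord_succ j i m''
      have h1 : cs.wordProd ω * cs.simple i = cs.wordProd (alternatingWord i j m'') := by
        rw [hcase, hconcat, cs.wordProd_concat, mul_assoc, cs.simple_mul_simple_self, mul_one]
      have h2 : cs.length (cs.wordProd ω * cs.simple i) ≤ m'' := by
        rw [h1]
        have := cs.length_wordProd_le (alternatingWord i j m'')
        rwa [length_alternatingWord] at this
      omega
  · -- u = alternating word ending in j
    have hmlen : m = ω.length := by
      have h1 : cs.length (cs.wordProd ω) ≤ m := by
        rw [hcase]
        have := cs.length_wordProd_le (alternatingWord i j m)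
        rwa [length_alternatingWord] at this
      omega
    have hconcat : cs.wordProd ω * cs.simple i = cs.wordProd (alternatingWord j i (m+1)) := by
      rw [hcase, alternatingWord_succ j i m, cs.wordProd_concat]
    have hbound : M.M i j = 0 ∨ m + 1 ≤ M.M i j := by
      by_cases h0 : M.M i j = 0
      · exact Or.inl h0
      · right
        by_contra hgt
        push_neg at hgt
        have h0' : M.M j i ≠ 0 := by rwa [M.symmetric j i]
        have hgt' : m + 1 > M.M j i := by rw [M.symmetric j i]; omega
        apply cs.not_isReduced_alternatingWord j i h0' hgt'
        unfold CoxeterSystem.IsReduced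
        rw [length_alternatingWord, ← hconcat, hus, hmlen]
    set c := -G.bil (G.α i) (G.α j) with hc
    have hS : ∀ k, k ≤ m + 1 → 0 ≤ chebS c k := by
      rcases hbound with h0 | hMm
      · intro k _
        have hc1 : 1 ≤ c := by
          have := G.angle_infinite i j hij h0
          rw [hc]; linarith
        exact (chebS_nonneg_of_one_le hc1 k).1
      · intro k hk
        have h2 : 2 ≤ M.M i j := by
          have := M.off_diagonal i j hij
          omega
        have hMpos : (0:ℝ) < (M.M i j : ℝ) := by positivity
        set θ := Real.pi / (M.M i j : ℝ) with hθ
        have hθpos : 0 < θ := by rw [hθ]; positivity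
        have hθlt : θ < Real.pi := by
          rw [hθ, div_lt_iff₀ hMpos]
          have h1 : (1:ℝ) < (M.M i j : ℝ) := by exact_mod_cast (by omega : 1 < M.M i j)
          nlinarith [Real.pi_pos]
        have hsin : Real.sin θ ≠ 0 :=
          ne_of_gt (Real.sin_pos_of_pos_of_lt_pi hθpos hθlt)
        have hcos : c = Real.cos θ := by
          rw [hc, G.angle_finite i j hij (by omega), hθ]
          ring
        rw [hcos, chebS_eq_sin hsin k]
        apply div_nonneg _ (le_of_lt (Real.sin_pos_of_pos_of_lt_pi hθpos hθlt))
        apply Real.sin_nonneg_of_nonneg_of_le_pi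
        · positivity
        · rw [hθ]
          have hkM : (k:ℝ) ≤ (M.M i j : ℝ) := by exact_mod_cast le_trans hk hMm
          calc (k:ℝ) * (Real.pi / (M.M i j : ℝ)) = Real.pi * ((k:ℝ) / (M.M i j : ℝ)) := by ring
            _ ≤ Real.pi * 1 := by
                apply mul_le_mul_of_nonneg_left _ Real.pi_pos.le
                rw [div_le_one hMpos]; exact hkM
            _ = Real.pi := mul_one _
    rw [hcase, G.alt_act i j hij m]
    refine ⟨_, _, ?_, ?_, rfl⟩
    · split
      · exact hS _ (by omega)
      · exact hS _ (by omega)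
    · split
      · exact hS _ (by omega)
      · exact hS _ (by omega)

/-- Tits' theorem: if `ℓ(w sᵢ) = ℓ(w) + 1` then `w αᵢ` is a positive root. -/
theorem pos_of_succ :
    ∀ (n : ℕ) (w : W) (i : B), cs.length w = n →
      cs.length (w * cs.simple i) = n + 1 → G.π w (G.α i) ∈ G.PosCone := by
  intro n
  induction n using Nat.strong_induction_on with
  | _ n IH =>
  intro w i hw hwi
  rcases Nat.eq_zero_or_pos n with hn | hn
  · subst hn
    have : w = 1 := cs.length_eq_zero_iff.mp hw
    subst this
    rw [G.pi_one_apply]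
    exact G.alpha_mem_posCone i
  · have hwne : w ≠ 1 := by
      intro h; subst h; rw [cs.length_one] at hw; omega
    obtain ⟨j, hj⟩ := cs.exists_rightDescent_of_ne_one hwne
    have hj' : cs.length (w * cs.simple j) < cs.length w := hj
    have hij : j ≠ i := by
      rintro rfl
      rw [hw, hwi] at hj'
      omega
    have key : ∀ (m : ℕ) (v : W) (ω : List B), cs.length v = m →
        (∀ l ∈ ω, l = i ∨ l = j) → v * cs.wordProd ω = w → m + ω.length = n →
        G.π w (G.α i) ∈ G.PosCone := by
      intro m
      induction m using Nat.strong_induction_on with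
      | _ m IH2 =>
      intro v ω hv hω hvw hlen
      by_cases h1 : cs.length (v * cs.simple i) + 1 = cs.length v
      · refine IH2 (m-1) (by omega) (v * cs.simple i) (i :: ω) (by omega) ?_ ?_ ?_
        · intro l hl
          rcases List.mem_cons.mp hl with rfl | hl'
          · exact Or.inl rfl
          · exact hω l hl'
        · rw [cs.wordProd_cons, ← mul_assoc, mul_assoc v, cs.simple_mul_simple_self, mul_one]
          exact hvw
        · simp only [List.length_cons]
          omega
      · by_cases h2 : cs.length (v * cs.simple j) + 1 = cs.length v
        · refine IH2 (m-1) (by omega) (v * cs.simple j) (j :: ω) (by omega) ?_ ?_ ?_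
          · intro l hl
            rcases List.mem_cons.mp hl with rfl | hl'
            · exact Or.inr rfl
            · exact hω l hl'
          · rw [cs.wordProd_cons, ← mul_assoc, mul_assoc v, cs.simple_mul_simple_self, mul_one]
            exact hvw
          · simp only [List.length_cons]
            omega
        · have hvi : cs.length (v * cs.simple i) = m + 1 :=
            hv ▸ (cs.length_mul_simple v i).resolve_right (fun h => h1 (by omega))
          have hvj : cs.length (v * cs.simple j) = m + 1 :=
            hv ▸ (cs.length_mul_simple v j).resolve_right (fun h => h2 (by omega))
          have hωne : ω ≠ [] := by
            rintro rfl
            rw [cs.wordProd_nil, mul_one] at hvw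
            subst hvw
            rw [hw] at hv
            subst hv
            omega
          have hlenpos : 0 < ω.length := List.length_pos_iff.mpr hωne
          have hmn : m < n := by omega
          have hvPi : G.π v (G.α i) ∈ G.PosCone := IH m hmn v i hv hvi
          have hvPj : G.π v (G.α j) ∈ G.PosCone := IH m hmn v j hv hvj
          set u := cs.wordProd ω with hu
          have hu_le : cs.length u ≤ ω.length := cs.length_wordProd_le ω
          have hu_ge : ω.length ≤ cs.length u := by
            have h := cs.length_mul_le v u
            rw [hvw, hw, hv] at h
            omega
          have hured : cs.length u = ω.length := le_antisymm hu_le hu_ge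
          have husi : cs.length (u * cs.simple i) = ω.length + 1 := by
            have hle : cs.length (u * cs.simple i) ≤ ω.length + 1 := by
              have h := cs.length_mul_le u (cs.simple i)
              rw [cs.length_simple] at h
              omega
            have hge : ω.length + 1 ≤ cs.length (u * cs.simple i) := by
              have heq : w * cs.simple i = v * (u * cs.simple i) := by
                rw [← hvw, mul_assoc]
              have h := cs.length_mul_le v (u * cs.simple i)
              rw [← heq, hwi, hv] at h
              omega
            omega
          obtain ⟨a, b, ha, hb, hab⟩ := G.dihedral_pos i j (Ne.symm hij) ω hω hured husi
          rw [← hu] at hab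
          have hfin : G.π w (G.α i) = a • G.π v (G.α i) + b • G.π v (G.α j) := by
            rw [← hvw, G.pi_mul_apply, hab, map_add, map_smul, map_smul]
          rw [hfin]
          exact G.add_mem_posCone _ (G.smul_mem_posCone ha _ hvPi) _
            (G.smul_mem_posCone hb _ hvPj)
    exact key n w [] hw (by simp) (by rw [cs.wordProd_nil, mul_one]) (by simp)

end GeomRep

namespace GeomRep

variable {B : Type*} [Fintype B] {W : Type*} [Group W]
  {M : CoxeterMatrix B} {cs : CoxeterSystem M W}
  {V : Type*} [AddCommGroup V] [Module ℝ V] (G : GeomRep M cs V)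

/-! ### The positive functional and consequences -/

def posF : V →ₗ[ℝ] ℝ := G.exists_posFun.choose

lemma posF_alpha_pos (b : B) : 0 < G.posF (G.α b) := G.exists_posFun.choose_spec b

lemma posF_pos_of_posCone {v : V} (hv : v ∈ G.PosCone) (hv0 : v ≠ 0) : 0 < G.posF v := by
  obtain ⟨c, hc, rfl⟩ := hv
  rw [map_sum]
  have hterm : ∀ b, G.posF (c b • G.α b) = c b * G.posF (G.α b) := fun b => by
    rw [map_smul, smul_eq_mul]
  rw [Finset.sum_congr rfl (fun b _ => hterm b)]
  apply Finset.sum_pos'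
  · exact fun b _ => mul_nonneg (hc b) (G.posF_alpha_pos b).le
  · by_contra hno
    push_neg at hno
    apply hv0
    have hcz : ∀ b, c b = 0 := by
      intro b
      have h1 := hno b (Finset.mem_univ b)
      have h2 := mul_nonneg (hc b) (G.posF_alpha_pos b).le
      have h3 : c b * G.posF (G.α b) = 0 := le_antisymm h1 h2
      rcases mul_eq_zero.mp h3 with h | h
      · exact h
      · exact absurd h (G.posF_alpha_pos b).ne'
    rw [Finset.sum_congr rfl (fun b _ => by rw [hcz b, zero_smul])]
    simp

lemma mem_phiPos_iff {v : V} : v ∈ G.PhiPos ↔ v ∈ G.Phi ∧ v ∈ G.PosCone := by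
  unfold PhiPos
  rw [G.coneOf_range_alpha]
  rfl

lemma posF_pos_of_phiPos {v : V} (hv : v ∈ G.PhiPos) : 0 < G.posF v := by
  obtain ⟨h1, h2⟩ := G.mem_phiPos_iff.mp hv
  exact G.posF_pos_of_posCone h2 (G.root_ne_zero h1)

lemma neg_not_phiPos {v : V} (hv : v ∈ G.PhiPos) : -v ∉ G.PhiPos := by
  intro h
  have h1 := G.posF_pos_of_phiPos hv
  have h2 := G.posF_pos_of_phiPos h
  rw [map_neg] at h2
  linarith

lemma alpha_mem_phiPos (i : B) : G.α i ∈ G.PhiPos :=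
  G.mem_phiPos_iff.mpr ⟨G.alpha_mem_phi i, G.alpha_mem_posCone i⟩

/-- Dichotomy: every root is positive or negative. -/
lemma root_mem_or {v : V} (hv : v ∈ G.Phi) : v ∈ G.PhiPos ∨ -v ∈ G.PhiPos := by
  obtain ⟨w, i, rfl⟩ := hv
  rcases cs.length_mul_simple w i with h | h
  · left
    exact G.mem_phiPos_iff.mpr ⟨⟨w, i, rfl⟩, G.pos_of_succ (cs.length w) w i rfl h⟩
  · right
    set w' := w * cs.simple i with hw'
    have hww : w' * cs.simple i = w := by
      rw [hw', mul_assoc, cs.simple_mul_simple_self, mul_one]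
    have hlen : cs.length (w' * cs.simple i) = cs.length w' + 1 := by
      rw [hww]; omega
    have hpos : G.π w' (G.α i) ∈ G.PosCone := G.pos_of_succ (cs.length w') w' i rfl hlen
    have hneg : -(G.π w (G.α i)) = G.π w' (G.α i) := by
      rw [hw', G.pi_mul_apply, G.pi_simple_alpha, map_neg]
    rw [hneg]
    exact G.mem_phiPos_iff.mpr ⟨hneg ▸ G.phi_neg_mem ⟨w, i, rfl⟩, hpos⟩

/-- The simple reflection `sᵢ` permutes the positive roots other than `αᵢ`. -/
lemma sigma_mem_phiPos {i : B} {v : V} (hv : v ∈ G.PhiPos) (hne : v ≠ G.α i) :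
    G.π (cs.simple i) v ∈ G.PhiPos := by
  classical
  obtain ⟨hvPhi, hvPos⟩ := G.mem_phiPos_iff.mp hv
  have hx : G.π (cs.simple i) v ∈ G.Phi := G.phi_pi_mem hvPhi _
  rcases G.root_mem_or hx with h | h
  · exact h
  exfalso
  obtain ⟨hgPhi, hgPos⟩ := G.mem_phiPos_iff.mp h
  obtain ⟨b, hb, hbv⟩ := hvPos
  obtain ⟨g, hg, hgv⟩ := hgPos
  set cc : ℝ := 2 * G.bil (G.α i) v with hcc
  have hsum : ∑ k, (b k + g k) • G.α k = cc • G.α i := by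
    have h1 : v + (-(G.π (cs.simple i) v)) = cc • G.α i := by
      rw [G.pi_simple_apply, hcc]
      module
    rw [← h1, ← hgv, ← hbv, ← Finset.sum_add_distrib]
    congr 1
    ext k
    rw [add_smul]
  rcases le_or_gt cc (b i + g i) with hd | hd
  · set e : B → ℝ := fun k => if k = i then b i + g i - cc else b k + g k with he
    have he0 : ∀ k, 0 ≤ e k := by
      intro k
      rw [he]; dsimp only
      split
      · linarith
      · exact add_nonneg (hb k) (hg k)
    have hesum : ∑ k, e k • G.α k = 0 := by
      have hek : ∀ k, e k • G.α k
          = (b k + g k) • G.α k - (if k = i then cc else 0) • G.α k := by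
        intro k
        rw [← sub_smul]
        congr 1
        rw [he]; dsimp only
        split
        · rename_i hki
          subst hki
          ring
        · ring
      rw [Finset.sum_congr rfl (fun k _ => hek k), Finset.sum_sub_distrib]
      have hite : ∑ k, (if k = i then cc else 0) • G.α k = cc • G.α i := by
        have : ∀ k : B, (if k = i then cc else 0) • G.α k
            = if k = i then cc • G.α k else 0 := by
          intro k; split <;> simp
        rw [Finset.sum_congr rfl (fun k _ => this k),
          Finset.sum_ite_eq' Finset.univ i (fun k => cc • G.α k)]
        simp
      rw [hite, hsum, sub_self]
    have hzero := G.pos_indep e he0 hesum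
    have hbk : ∀ k, k ≠ i → b k = 0 := by
      intro k hk
      have h1 := hzero k
      rw [he] at h1; dsimp only at h1
      rw [if_neg hk] at h1
      have := hb k; have := hg k
      linarith
    have hvi : v = b i • G.α i := by
      rw [← hbv, Finset.sum_eq_single i]
      · intro k _ hk
        rw [hbk k hk, zero_smul]
      · intro hni
        exact absurd (Finset.mem_univ i) hni
    have h1 : G.bil v v = 1 := G.bil_root_self hvPhi
    rw [hvi] at h1
    simp only [map_smul, LinearMap.smul_apply, smul_eq_mul] at h1
    rw [G.norm_one] at h1
    have hb1 : b i = 1 := by nlinarith [hb i]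
    exact hne (by rw [hvi, hb1, one_smul])
  · have herase := Finset.sum_erase_add Finset.univ (fun k => (b k + g k) • G.α k)
      (Finset.mem_univ i)
    have hkey : ∑ k ∈ Finset.univ.erase i, (b k + g k) • G.α k
        = (cc - b i - g i) • G.α i := by
      have : ∑ k ∈ Finset.univ.erase i, (b k + g k) • G.α k
          = (∑ k, (b k + g k) • G.α k) - (b i + g i) • G.α i := by
        rw [← herase]; abel
      rw [this, hsum, sub_smul, sub_smul, add_smul]
      abel
    have happ := congrArg (fun x => G.bil (G.α i) x) hkey
    simp only [map_sum, map_smul, smul_eq_mul] at happ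
    rw [G.norm_one] at happ
    have hles : ∑ k ∈ Finset.univ.erase i, (b k + g k) * G.bil (G.α i) (G.α k) ≤ 0 := by
      apply Finset.sum_nonpos
      intro k hk
      have hki : k ≠ i := (Finset.mem_erase.mp hk).1
      exact mul_nonpos_of_nonneg_of_nonpos (add_nonneg (hb k) (hg k))
        (G.gram_nonpos (Ne.symm hki))
    rw [happ] at hles
    nlinarith

end GeomRep

namespace GeomRep

variable {B : Type*} [Fintype B] {W : Type*} [Group W]
  {M : CoxeterMatrix B} {cs : CoxeterSystem M W}
  {V : Type*} [AddCommGroup V] [Module ℝ V] (G : GeomRep M cs V)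

lemma pi_inv_apply (w : W) (v : V) : G.π w⁻¹ (G.π w v) = v := by
  rw [← G.pi_mul_apply, inv_mul_cancel, G.pi_one_apply]

lemma pi_apply_inv (w : W) (v : V) : G.π w (G.π w⁻¹ v) = v := by
  rw [← G.pi_mul_apply, mul_inv_cancel, G.pi_one_apply]

lemma mem_N_iff {w : W} {v : V} :
    v ∈ G.N w ↔ v ∈ G.PhiPos ∧ -(G.π w⁻¹ v) ∈ G.PhiPos := by
  constructor
  · rintro ⟨h1, x, hx, rfl⟩
    refine ⟨h1, ?_⟩
    rw [G.pi_inv_apply]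
    exact Set.mem_neg.mp hx
  · rintro ⟨h1, h2⟩
    exact ⟨h1, G.π w⁻¹ v, Set.mem_neg.mpr h2, G.pi_apply_inv w v⟩

lemma root_smul_alpha {i : B} {t : ℝ} (ht : 0 ≤ t) (h : t • G.α i ∈ G.Phi) :
    t • G.α i = G.α i := by
  have h1 := G.bil_root_self h
  simp only [map_smul, LinearMap.smul_apply, smul_eq_mul] at h1
  rw [G.norm_one] at h1
  have ht1 : t = 1 := by nlinarith
  rw [ht1, one_smul]

lemma exists_alpha_mem {A : Set V} (hA : A ⊆ G.PhiPos) (hfin : A.Finite)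
    (hne : A.Nonempty) (hcl : G.IsClosedSet (G.PhiPos \ A)) : ∃ i, G.α i ∈ A := by
  classical
  obtain ⟨β, hβT, hβmin⟩ := Finset.exists_min_image hfin.toFinset G.posF
    ((Set.Finite.toFinset_nonempty hfin).mpr hne)
  rw [Set.Finite.mem_toFinset] at hβT
  have hβPos := hA hβT
  obtain ⟨hβPhi, hβC⟩ := G.mem_phiPos_iff.mp hβPos
  obtain ⟨b, hb, hbβ⟩ := hβC
  have hβ1 : G.bil β β = 1 := G.bil_root_self hβPhi
  have hsum : ∑ k, b k * G.bil (G.α k) β = 1 := by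
    have hexp : G.bil (∑ k, b k • G.α k) β = ∑ k, b k * G.bil (G.α k) β := by
      rw [map_sum, LinearMap.sum_apply]
      exact Finset.sum_congr rfl (fun k _ => by
        rw [map_smul, LinearMap.smul_apply, smul_eq_mul])
    rw [hbβ] at hexp
    rw [← hexp, hβ1]
  have hk : ∃ k, 0 < G.bil (G.α k) β := by
    by_contra hno
    push_neg at hno
    have hle : ∑ k, b k * G.bil (G.α k) β ≤ 0 :=
      Finset.sum_nonpos (fun k _ => mul_nonpos_of_nonneg_of_nonpos (hb k) (hno k))
    linarith
  obtain ⟨k, hbil⟩ := hk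
  by_cases hβk : β = G.α k
  · exact ⟨k, hβk ▸ hβT⟩
  by_cases hαkA : G.α k ∈ A
  · exact ⟨k, hαkA⟩
  exfalso
  set γ := G.π (cs.simple k) β with hγ
  have hγPos : γ ∈ G.PhiPos := G.sigma_mem_phiPos hβPos hβk
  set cc : ℝ := 2 * G.bil (G.α k) β with hcc
  have hccpos : 0 < cc := by rw [hcc]; linarith
  have hβeq : β = cc • G.α k + γ := by
    rw [hγ, G.pi_simple_apply, hcc]
    module
  have hγA : γ ∈ A := by
    by_contra hγA
    have h1 : G.α k ∈ G.PhiPos \ A := ⟨G.alpha_mem_phiPos k, hαkA⟩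
    have h2 : γ ∈ G.PhiPos \ A := ⟨hγPos, hγA⟩
    have h3 : β ∈ coneOf {G.α k, γ} ∩ G.Phi :=
      ⟨mem_coneOf_pair.mpr ⟨cc, 1, hccpos.le, zero_le_one, by rw [one_smul]; exact hβeq⟩, hβPhi⟩
    exact (hcl _ h1 _ h2 h3).2 hβT
  have hlt : G.posF γ < G.posF β := by
    have heq : G.posF β = cc * G.posF (G.α k) + G.posF γ := by
      rw [hβeq]
      simp [map_add, map_smul]
    nlinarith [G.posF_alpha_pos k]
  have := hβmin γ ((Set.Finite.mem_toFinset hfin).mpr hγA)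
  linarith

lemma biclosed_eq_N : ∀ (n : ℕ) (A : Set V), A.ncard = n → A ⊆ G.PhiPos → A.Finite →
    G.IsBiclosed A → ∃ w : W, A = G.N w := by
  intro n
  induction n using Nat.strong_induction_on with
  | _ n IH =>
  intro A hcard hA hfin hbc
  rcases Nat.eq_zero_or_pos n with hn | hn
  · subst hn
    have hAe : A = ∅ := (Set.ncard_eq_zero hfin).mp hcard
    refine ⟨1, ?_⟩
    rw [hAe]
    ext v
    simp only [Set.mem_empty_iff_false, false_iff]
    intro hv
    rw [G.mem_N_iff] at hv
    obtain ⟨h1, h2⟩ := hv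
    rw [inv_one, G.pi_one_apply] at h2
    exact G.neg_not_phiPos h1 h2
  · have hAne : A.Nonempty := (Set.ncard_pos hfin).mp (hcard ▸ hn)
    obtain ⟨i, hiA⟩ := G.exists_alpha_mem hA hfin hAne hbc.2
    set σ : V → V := fun x => G.π (cs.simple i) x with hσ
    have hσinj : Function.Injective σ := (G.π (cs.simple i)).injective
    have hσσ : ∀ x, σ (σ x) = x := fun x => G.pi_simple_sq i x
    have hσαi : σ (G.α i) = -G.α i := G.pi_simple_alpha i
    set A' : Set V := σ '' (A \ {G.α i}) with hA'
    have hmemA' : ∀ x, x ∈ A' ↔ σ x ∈ A ∧ σ x ≠ G.α i := by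
      intro x
      constructor
      · rintro ⟨y, ⟨hy1, hy2⟩, rfl⟩
        rw [hσσ]
        exact ⟨hy1, by simpa using hy2⟩
      · rintro ⟨h1, h2⟩
        exact ⟨σ x, ⟨h1, h2⟩, hσσ x⟩
    have hA'sub : A' ⊆ G.PhiPos := by
      rintro x ⟨y, ⟨hy1, hy2⟩, rfl⟩
      exact G.sigma_mem_phiPos (hA hy1) (by simpa using hy2)
    have hαiA' : G.α i ∉ A' := by
      intro h
      rw [hmemA', hσαi] at h
      exact G.neg_not_phiPos (G.alpha_mem_phiPos i) (hA h.1)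
    have hfin' : A'.Finite := (hfin.diff).image σ
    have hcard' : A'.ncard < n := by
      rw [hA', Set.ncard_image_of_injective _ hσinj]
      have hd : (A \ {G.α i}).ncard = A.ncard - 1 :=
        Set.ncard_diff_singleton_of_mem hiA
      omega
    -- helper: σ of a positive root ≠ αi, not in A', is a positive root not in A
    have hfact : ∀ x', x' ∈ G.PhiPos → x' ∉ A' → x' ≠ G.α i → σ x' ∈ G.PhiPos \ A := by
      intro x' hx'P hx'nA hx'ne
      have h1 : σ x' ∈ G.PhiPos := G.sigma_mem_phiPos hx'P hx'ne
      refine ⟨h1, ?_⟩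
      intro hmem
      apply hx'nA
      rw [hmemA']
      refine ⟨hmem, ?_⟩
      intro h2
      have h3 : x' = -G.α i := by rw [← hσσ x', h2]; exact hσαi
      have := h3 ▸ hx'P
      exact G.neg_not_phiPos (G.alpha_mem_phiPos i) this
    have hclosed' : G.IsClosedSet A' := by
      rintro a' ha' b' hb' γ' ⟨hγ'cone, hγ'Phi⟩
      obtain ⟨cx, dx, hcx, hdx, hγ'eq⟩ := mem_coneOf_pair.mp hγ'cone
      have ha'P := hA'sub ha'
      have hb'P := hA'sub hb'
      have hγ'Pos : γ' ∈ G.PosCone := by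
        rw [hγ'eq]
        exact G.add_mem_posCone _
          (G.smul_mem_posCone hcx _ (G.mem_phiPos_iff.mp ha'P).2) _
          (G.smul_mem_posCone hdx _ (G.mem_phiPos_iff.mp hb'P).2)
      have hγ'pp : γ' ∈ G.PhiPos := G.mem_phiPos_iff.mpr ⟨hγ'Phi, hγ'Pos⟩
      rw [hmemA'] at ha' hb' ⊢
      have hγeq : σ γ' = cx • σ a' + dx • σ b' := by
        rw [hγ'eq]
        simp only [hσ, map_add, map_smul]
      have hγPhi : σ γ' ∈ G.Phi := G.phi_pi_mem hγ'Phi _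
      have hγA : σ γ' ∈ A := hbc.1 _ ha'.1 _ hb'.1
        ⟨mem_coneOf_pair.mpr ⟨cx, dx, hcx, hdx, hγeq⟩, hγPhi⟩
      refine ⟨hγA, ?_⟩
      intro hcontra
      have h3 : γ' = -G.α i := by rw [← hσσ γ', hcontra]; exact hσαi
      have h4 : -γ' ∈ G.PhiPos := by rw [h3, neg_neg]; exact G.alpha_mem_phiPos i
      exact G.neg_not_phiPos hγ'pp h4
    have hcompl' : G.IsClosedSet (G.PhiPos \ A') := by
      rintro a' ⟨ha'P, ha'nA⟩ b' ⟨hb'P, hb'nA⟩ γ' ⟨hγ'cone, hγ'Phi⟩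
      obtain ⟨cx, dx, hcx, hdx, hγ'eq⟩ := mem_coneOf_pair.mp hγ'cone
      have hγ'Pos : γ' ∈ G.PosCone := by
        rw [hγ'eq]
        exact G.add_mem_posCone _
          (G.smul_mem_posCone hcx _ (G.mem_phiPos_iff.mp ha'P).2) _
          (G.smul_mem_posCone hdx _ (G.mem_phiPos_iff.mp hb'P).2)
      have hγ'pp : γ' ∈ G.PhiPos := G.mem_phiPos_iff.mpr ⟨hγ'Phi, hγ'Pos⟩
      refine ⟨hγ'pp, ?_⟩
      intro hγ'A'
      rw [hmemA'] at hγ'A'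
      obtain ⟨hγA, hγne⟩ := hγ'A'
      -- a case analysis on whether a', b' equal αi
      have hsingle : ∀ t : ℝ, 0 ≤ t → γ' = t • G.α i → False := by
        intro t ht hteq
        have hγ'αi : γ' = G.α i := by
          rw [hteq]
          exact G.root_smul_alpha ht (hteq ▸ hγ'Phi)
        have h5 : σ γ' = -G.α i := by rw [hγ'αi]; exact hσαi
        rw [h5] at hγA
        exact G.neg_not_phiPos (G.alpha_mem_phiPos i) (hA hγA)
      have hmix : ∀ x', x' ∈ G.PhiPos → x' ∉ A' → x' ≠ G.α i →
          ∀ cα cb : ℝ, 0 ≤ cα → 0 ≤ cb → γ' = cα • G.α i + cb • x' → False := by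
        intro x' hx'P hx'nA hx'ne cα cb hcα hcb heq
        have hx'' := hfact x' hx'P hx'nA hx'ne
        rcases eq_or_lt_of_le hcb with hcb0 | hcb0
        · exact hsingle cα hcα (by rw [heq, ← hcb0]; module)
        · -- σ x' ∈ cone{σγ', αi} ∩ Φ ⊆ A
          have hγeq : σ γ' = cα • (-G.α i) + cb • σ x' := by
            rw [heq]
            simp only [hσ, map_add, map_smul]
            rw [show G.π (cs.simple i) (G.α i) = -G.α i from G.pi_simple_alpha i]
          have hbeq : σ x' = (1/cb) • σ γ' + (cα/cb) • G.α i := by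
            have h6 : cb • σ x' = σ γ' + cα • G.α i := by rw [hγeq]; module
            calc σ x' = (1/cb) • (cb • σ x') := by
                  rw [smul_smul]
                  rw [show (1/cb) * cb = 1 by field_simp]
                  rw [one_smul]
              _ = (1/cb) • (σ γ' + cα • G.α i) := by rw [h6]
              _ = (1/cb) • σ γ' + (cα/cb) • G.α i := by
                  rw [smul_add, smul_smul]
                  ring_nf
          have hσx'Phi : σ x' ∈ G.Phi := G.phi_pi_mem (G.mem_phiPos_iff.mp hx'P).1 _
          have h7 : σ x' ∈ A := hbc.1 _ hγA _ hiA
            ⟨mem_coneOf_pair.mpr ⟨1/cb, cα/cb, by positivity, by positivity, hbeq⟩, hσx'Phi⟩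
          exact hx''.2 h7
      by_cases hax : a' = G.α i
      · by_cases hbx : b' = G.α i
        · exact hsingle (cx + dx) (by positivity)
            (by rw [hγ'eq, hax, hbx]; module)
        · exact hmix b' hb'P hb'nA hbx cx dx hcx hdx (by rw [hγ'eq, hax])
      · by_cases hbx : b' = G.α i
        · exact hmix a' ha'P ha'nA hax dx cx hdx hcx (by rw [hγ'eq, hbx]; module)
        · have ha'' := hfact a' ha'P ha'nA hax
          have hb'' := hfact b' hb'P hb'nA hbx
          have hγeq : σ γ' = cx • σ a' + dx • σ b' := by
            rw [hγ'eq]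
            simp only [hσ, map_add, map_smul]
          have hγPhi : σ γ' ∈ G.Phi := G.phi_pi_mem hγ'Phi _
          have := hbc.2 _ ha'' _ hb''
            ⟨mem_coneOf_pair.mpr ⟨cx, dx, hcx, hdx, hγeq⟩, hγPhi⟩
          exact this.2 hγA
    obtain ⟨u, hu⟩ := IH A'.ncard hcard' A' rfl hA'sub hfin' ⟨hclosed', hcompl'⟩
    refine ⟨cs.simple i * u, ?_⟩
    have hαiNu : G.α i ∉ G.N u := hu ▸ hαiA'
    have hui : G.π u⁻¹ (G.α i) ∈ G.PhiPos := by
      rcases G.root_mem_or (G.phi_pi_mem (G.alpha_mem_phi i) u⁻¹) with h | h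
      · exact h
      · exact absurd (G.mem_N_iff.mpr ⟨G.alpha_mem_phiPos i, h⟩) hαiNu
    ext v
    rw [G.mem_N_iff]
    have hinv : (cs.simple i * u)⁻¹ = u⁻¹ * cs.simple i := by
      rw [mul_inv_rev, cs.inv_simple]
    constructor
    · intro hvA
      have hvP := hA hvA
      refine ⟨hvP, ?_⟩
      rw [hinv, G.pi_mul_apply]
      by_cases hvαi : v = G.α i
      · rw [hvαi, show G.π (cs.simple i) (G.α i) = -G.α i from G.pi_simple_alpha i,
          map_neg, neg_neg]
        exact hui
      · have h1 : σ v ∈ A' := (hmemA' (σ v)).mpr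
          ⟨by rw [hσσ]; exact hvA, by rw [hσσ]; exact hvαi⟩
        rw [hu, G.mem_N_iff] at h1
        exact h1.2
    · rintro ⟨hvP, hvN⟩
      rw [hinv, G.pi_mul_apply] at hvN
      by_cases hvαi : v = G.α i
      · rw [hvαi]; exact hiA
      · have h1 : σ v ∈ G.PhiPos := G.sigma_mem_phiPos hvP hvαi
        have h2 : σ v ∈ G.N u := G.mem_N_iff.mpr ⟨h1, hvN⟩
        rw [← hu, hmemA', hσσ] at h2
        exact h2.1

end GeomRep


/-- A finite biclosed subset of `Φ⁺` is an inversion set. -/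
theorem stmt11 {B : Type*} [Fintype B] {W : Type*} [Group W]
    {M : CoxeterMatrix B} {cs : CoxeterSystem M W}
    {V : Type*} [AddCommGroup V] [Module ℝ V] (G : GeomRep M cs V)
    (A : Set V) (hA : A ⊆ G.PhiPos) (hfin : A.Finite) (hbc : G.IsBiclosed A) :
    ∃ w : W, A = G.N w :=
  G.biclosed_eq_N A.ncard A rfl hA hfin hbc
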